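/- Conservation of total mass in the discretized transient pipe model: summing the discretized continuity equations over all pipes and combining with the flow conservation constraints at inner nodes, the change in total linepack (Σ over pipes of (L·A/(2·R_s·T·z))·(p_l + p_r)) between two adjacent time steps equals (Δt)·(total net inflow over boundary nodes at the later time step). -/

import Mathlib

theorem stmt_12 {ι V : Type*} [Fintype ι] [Fintype V] [DecidableEq V]
    (l r : ι → V) (L A : ι → ℝ) (K Δt : ℝ)
    (hL : ∀ e, 0 < L e) (hA : ∀ e, 0 < A e) (hK : 0 < K)
    (p0 p1 : V → ℝ) (ql qr : ι → ℝ) (b : V → ℝ)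
    (hcont : ∀ e, p1 (l e) + p1 (r e) - p0 (l e) - p0 (r e)
      + (2 * K * Δt / (L e * A e)) * (qr e - ql e) = 0)
    (hcons : ∀ v, (∑ e ∈ Finset.univ.filter (fun e => r e = v), qr e)
      - (∑ e ∈ Finset.univ.filter (fun e => l e = v), ql e) + b v = 0) :
    ∑ e, (L e * A e / (2 * K)) * ((p1 (l e) + p1 (r e)) - (p0 (l e) + p0 (r e)))
      = Δt * ∑ v, b v := by
  have h1 : ∀ e, (L e * A e / (2 * K)) * ((p1 (l e) + p1 (r e)) - (p0 (l e) + p0 (r e)))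
      = Δt * (ql e - qr e) := by
    intro e
    have hLA : L e * A e ≠ 0 := ne_of_gt (mul_pos (hL e) (hA e))
    have hK2 : (2 * K) ≠ 0 := by positivity
    have := hcont e
    field_simp at this ⊢
    have h2 : 2 * K * Δt * (qr e - ql e) / (L e * A e) * (L e * A e) = 2 * K * Δt * (qr e - ql e) := div_mul_cancel₀ _ hLA
    linear_combination (L e * A e) * this - h2
  have hb : ∀ v, b v = (∑ e ∈ Finset.univ.filter (fun e => l e = v), ql e)
      - (∑ e ∈ Finset.univ.filter (fun e => r e = v), qr e) := by
    intro v; linarith [hcons v]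
  calc ∑ e, (L e * A e / (2 * K)) * ((p1 (l e) + p1 (r e)) - (p0 (l e) + p0 (r e)))
      = ∑ e, Δt * (ql e - qr e) := by simp_rw [h1]
    _ = Δt * ((∑ e, ql e) - ∑ e, qr e) := by
        rw [← Finset.mul_sum, Finset.sum_sub_distrib]
    _ = Δt * ∑ v, b v := by
        congr 1
        simp_rw [hb]
        rw [Finset.sum_sub_distrib, Finset.sum_fiberwise Finset.univ l ql,
          Finset.sum_fiberwise Finset.univ r qr]
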